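/- For the simple symmetric random walk on ℤ started at 0, P(T > 2n) = P(S_{2n} ∈ {0,2}) = 4^{−n} (C(2n,n) + C(2n,n+1)), where T is the first hitting time of 2 and C(·,·) denotes binomial coefficients. -/

import Mathlib

open MeasureTheory ProbabilityTheory

set_option linter.unusedSectionVars false
set_option linter.unusedVariables false

namespace RW6

def step (b : Bool) : ℤ := if b then 1 else -1

lemma step_le_one (b : Bool) : step b ≤ 1 := by cases b <;> simp [step]

lemma step_not (b : Bool) : step (!b) = - step b := by cases b <;> simp [step]

lemma step_inj : Function.Injective step := by
  intro a b h; cases a <;> cases b <;> simp_all [step]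

variable {m : ℕ}

def stepAt (σ : Fin m → Bool) (i : ℕ) : ℤ :=
  if h : i < m then step (σ ⟨i, h⟩) else 0

def psum (σ : Fin m → Bool) (k : ℕ) : ℤ := ∑ i ∈ Finset.range k, stepAt σ i

lemma psum_zero (σ : Fin m → Bool) : psum σ 0 = 0 := by simp [psum]

lemma psum_succ (σ : Fin m → Bool) {k : ℕ} (hk : k < m) :
    psum σ (k + 1) = psum σ k + step (σ ⟨k, hk⟩) := by
  rw [psum, Finset.sum_range_succ, stepAt, dif_pos hk]; rfl

def tcount (σ : Fin m → Bool) : ℕ := (Finset.univ.filter (fun i => σ i = true)).card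

lemma tcount_le (σ : Fin m → Bool) : tcount σ ≤ m := by
  simpa [tcount] using Finset.card_filter_le Finset.univ (fun i => σ i = true)

lemma psum_last (σ : Fin m → Bool) : psum σ m = 2 * (tcount σ : ℤ) - m := by
  have h1 : psum σ m = ∑ i : Fin m, step (σ i) := by
    rw [psum, ← Fin.sum_univ_eq_sum_range (fun i => stepAt σ i) m]
    exact Finset.sum_congr rfl fun i _ => by rw [stepAt, dif_pos i.isLt]
  have h2 : ∀ b : Bool, step b = 2 * (if b = true then (1:ℤ) else 0) - 1 := by decide
  rw [h1]
  simp_rw [h2]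
  rw [Finset.sum_sub_distrib, ← Finset.mul_sum, Finset.sum_boole]
  simp [tcount]

def hits (σ : Fin m → Bool) : Prop := ∃ k, k ≤ m ∧ psum σ k = 2

instance : DecidablePred (hits (m := m)) := fun σ => by unfold hits; infer_instance

lemma not_hits_psum_le {σ : Fin m → Bool} (h : ¬ hits σ) : ∀ k, k ≤ m → psum σ k ≤ 1 := by
  intro k
  induction k with
  | zero => intro _; simp [psum_zero]
  | succ k ih =>
    intro hk
    have hk' : k < m := hk
    have h1 := ih (le_of_lt hk')
    have h2 := psum_succ σ hk'
    have h3 := step_le_one (σ ⟨k, hk'⟩)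
    have h4 : psum σ (k+1) ≠ 2 := fun he => h ⟨k+1, hk, he⟩
    omega

lemma hits_of_last_ge {σ : Fin m → Bool} (h : 2 ≤ psum σ m) : hits σ := by
  by_contra hc
  have := not_hits_psum_le hc m le_rfl
  omega

lemma not_hits_tcount_le {n : ℕ} (hm : m = 2 * n) {σ : Fin m → Bool} (h : ¬ hits σ) :
    tcount σ ≤ n := by
  have h1 := psum_last σ
  have h2 : ¬ (2 ≤ psum σ m) := fun hh => h (hits_of_last_ge hh)
  omega

def reflS (σ : Fin m → Bool) : Fin m → Bool :=
  if h : hits σ then (fun i => if (i : ℕ) < Nat.find h then σ i else !(σ i)) else σ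

lemma reflS_apply {σ : Fin m → Bool} (h : hits σ) (i : Fin m) :
    reflS σ i = if (i : ℕ) < Nat.find h then σ i else !(σ i) := by
  rw [reflS, dif_pos h]

lemma psum_reflS_of_le {σ : Fin m → Bool} (h : hits σ) {k : ℕ} (hk : k ≤ Nat.find h) :
    psum (reflS σ) k = psum σ k := by
  refine Finset.sum_congr rfl fun i hi => ?_
  rw [Finset.mem_range] at hi
  unfold stepAt
  split
  · simp only [reflS_apply h, Fin.val_mk]
    rw [if_pos (by omega)]
  · rfl

lemma psum_reflS_of_ge {σ : Fin m → Bool} (h : hits σ) :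
    ∀ k, Nat.find h ≤ k → k ≤ m → psum (reflS σ) k = 4 - psum σ k := by
  intro k hk
  induction k, hk using Nat.le_induction with
  | base =>
    intro _
    rw [psum_reflS_of_le h le_rfl, (Nat.find_spec h).2]
    norm_num
  | succ k hk ih =>
    intro hkm
    have hk' : k < m := hkm
    rw [psum_succ _ hk', psum_succ _ hk', ih (le_of_lt hk'),
      reflS_apply h, if_neg (by simp only [Fin.val_mk]; omega), step_not]
    ring

lemma hits_reflS {σ : Fin m → Bool} (h : hits σ) : hits (reflS σ) :=
  ⟨Nat.find h, (Nat.find_spec h).1, by rw [psum_reflS_of_le h le_rfl]; exact (Nat.find_spec h).2⟩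

lemma find_reflS {σ : Fin m → Bool} (h : hits σ) (h' : hits (reflS σ)) :
    Nat.find h' = Nat.find h := by
  apply le_antisymm
  · exact Nat.find_le ⟨(Nat.find_spec h).1, by
      rw [psum_reflS_of_le h le_rfl]; exact (Nat.find_spec h).2⟩
  · rw [Nat.le_find_iff h']
    intro k hk hc
    exact Nat.find_min h hk ⟨hc.1, by rw [← psum_reflS_of_le h (le_of_lt hk)]; exact hc.2⟩

lemma reflS_reflS {σ : Fin m → Bool} (h : hits σ) : reflS (reflS σ) = σ := by
  have h' := hits_reflS h
  funext i
  rw [reflS_apply h', find_reflS h h', reflS_apply h]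
  by_cases hi : (i : ℕ) < Nat.find h <;> simp [hi]

lemma tcount_reflS {σ : Fin m → Bool} (h : hits σ) :
    (tcount (reflS σ) : ℤ) = m + 2 - tcount σ := by
  have h1 := psum_last σ
  have h2 := psum_last (reflS σ)
  have h3 : psum (reflS σ) m = 4 - psum σ m :=
    psum_reflS_of_ge h m (Nat.find_spec h).1 le_rfl
  omega


open Finset in
lemma card_tcount_eq (k : ℕ) :
    (Finset.univ.filter (fun σ : Fin m → Bool => tcount σ = k)).card = m.choose k := by
  have key : (Finset.univ.filter (fun σ : Fin m → Bool => tcount σ = k)).card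
      = (Finset.powersetCard k (Finset.univ : Finset (Fin m))).card := by
    refine Finset.card_bij' (fun σ _ => Finset.univ.filter (fun i => σ i = true))
      (fun s _ => fun i => decide (i ∈ s)) ?_ ?_ ?_ ?_
    · intro σ hσ
      rw [Finset.mem_powersetCard]
      exact ⟨Finset.subset_univ _, (Finset.mem_filter.mp hσ).2⟩
    · intro s hs
      rw [Finset.mem_powersetCard] at hs
      rw [Finset.mem_filter]
      refine ⟨Finset.mem_univ _, ?_⟩
      rw [tcount]
      simp only [decide_eq_true_eq]
      rw [Finset.filter_univ_mem]
      exact hs.2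
    · intro σ _; funext i; simp
    · intro s _; ext i; simp
  rw [key, Finset.card_powersetCard, Finset.card_univ, Fintype.card_fin]

lemma card_filter_tcount_mem (s : Finset ℕ) :
    (Finset.univ.filter (fun σ : Fin m → Bool => tcount σ ∈ s)).card
      = ∑ k ∈ s, m.choose k := by
  rw [Finset.card_eq_sum_card_fiberwise
    (f := tcount) (s := Finset.univ.filter (fun σ : Fin m → Bool => tcount σ ∈ s)) (t := s) (fun σ hσ => (Finset.mem_filter.mp hσ).2)]
  refine Finset.sum_congr rfl fun k hk => ?_
  rw [← card_tcount_eq k]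
  congr 1
  ext σ
  simp only [Finset.mem_filter, Finset.mem_univ, true_and]
  constructor
  · rintro ⟨_, h2⟩; exact h2
  · rintro h2; exact ⟨h2 ▸ hk, h2⟩

lemma sum_choose_id (n : ℕ) :
    ∑ k ∈ Finset.range (n+1), (2*n).choose k
      = (∑ k ∈ Finset.range (n-1), (2*n).choose k)
        + ((2*n).choose n + (2*n).choose (n+1)) := by
  cases n with
  | zero => simp
  | succ p =>
    have h1 : p + 1 + 1 = p + 2 := rfl
    have h2 : p + 1 - 1 = p := rfl
    rw [h1, h2, Finset.sum_range_succ, Finset.sum_range_succ]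
    have hsym : (2*(p+1)).choose p = (2*(p+1)).choose (p+2) := by
      rw [← Nat.choose_symm (by omega : p ≤ 2*(p+1))]
      congr 1
      omega
    omega

lemma sum_Icc_choose (n : ℕ) :
    ∑ k ∈ Finset.Icc (n+2) (2*n), (2*n).choose k
      = ∑ k ∈ Finset.range (n-1), (2*n).choose k := by
  refine Finset.sum_nbij' (fun k => 2*n - k) (fun k => 2*n - k) ?_ ?_ ?_ ?_ ?_
  · intro k hk
    simp only [Finset.mem_Icc] at hk
    simp only [Finset.mem_range]
    omega
  · intro k hk
    simp only [Finset.mem_range] at hk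
    simp only [Finset.mem_Icc]
    omega
  · intro k hk
    simp only [Finset.mem_Icc] at hk
    omega
  · intro k hk
    simp only [Finset.mem_range] at hk
    omega
  · intro k hk
    simp only [Finset.mem_Icc] at hk
    exact (Nat.choose_symm (by omega)).symm

lemma card_hits_le_eq {n : ℕ} (hm : m = 2*n) :
    (Finset.univ.filter (fun σ : Fin m → Bool => tcount σ ≤ n ∧ hits σ)).card
      = (Finset.univ.filter (fun σ : Fin m → Bool => n + 2 ≤ tcount σ)).card := by
  refine Finset.card_bij' (fun σ _ => reflS σ) (fun σ _ => reflS σ) ?_ ?_ ?_ ?_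
  · intro σ hσ
    rw [Finset.mem_filter] at hσ ⊢
    obtain ⟨_, ht, hh⟩ := hσ
    refine ⟨Finset.mem_univ _, ?_⟩
    have := tcount_reflS hh
    omega
  · intro σ hσ
    rw [Finset.mem_filter] at hσ ⊢
    obtain ⟨_, ht⟩ := hσ
    have hh : hits σ := hits_of_last_ge (by rw [psum_last]; omega)
    have := tcount_reflS hh
    refine ⟨Finset.mem_univ _, by omega, by exact hits_reflS hh⟩
  · intro σ hσ
    rw [Finset.mem_filter] at hσ
    exact reflS_reflS hσ.2.2
  · intro σ hσ
    rw [Finset.mem_filter] at hσ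
    exact reflS_reflS (hits_of_last_ge (by rw [psum_last]; omega))

lemma card_not_hits {n : ℕ} (hm : m = 2*n) :
    (Finset.univ.filter (fun σ : Fin m → Bool => ¬ hits σ)).card
      = (2*n).choose n + (2*n).choose (n+1) := by
  classical
  have hpart := Finset.card_filter_add_card_filter_not
    (s := Finset.univ.filter (fun σ : Fin m → Bool => tcount σ ≤ n)) (p := hits)
  rw [Finset.filter_filter, Finset.filter_filter] at hpart
  have hneg : (Finset.univ.filter (fun σ : Fin m → Bool => tcount σ ≤ n ∧ ¬ hits σ))
      = Finset.univ.filter (fun σ : Fin m → Bool => ¬ hits σ) := by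
    apply Finset.filter_congr
    intro σ _
    constructor
    · rintro ⟨_, h2⟩; exact h2
    · intro h2; exact ⟨not_hits_tcount_le hm h2, h2⟩
  rw [hneg] at hpart
  have hle : (Finset.univ.filter (fun σ : Fin m → Bool => tcount σ ≤ n)).card
      = ∑ k ∈ Finset.range (n+1), (2*n).choose k := by
    rw [show (Finset.univ.filter (fun σ : Fin m → Bool => tcount σ ≤ n))
        = Finset.univ.filter (fun σ : Fin m → Bool => tcount σ ∈ Finset.range (n+1)) from
      Finset.filter_congr fun σ _ => by simp [Nat.lt_succ_iff],
      card_filter_tcount_mem, hm]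
  have hge : (Finset.univ.filter (fun σ : Fin m → Bool => n + 2 ≤ tcount σ)).card
      = ∑ k ∈ Finset.range (n-1), (2*n).choose k := by
    rw [show (Finset.univ.filter (fun σ : Fin m → Bool => n + 2 ≤ tcount σ))
        = Finset.univ.filter (fun σ : Fin m → Bool => tcount σ ∈ Finset.Icc (n+2) (2*n)) from
      Finset.filter_congr fun σ _ => by
        have := tcount_le σ
        simp only [Finset.mem_Icc]
        omega,
      card_filter_tcount_mem, hm, sum_Icc_choose]
  have hbij := card_hits_le_eq hm
  have hid := sum_choose_id n
  omega

lemma card_end {n : ℕ} (hm : m = 2*n) :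
    (Finset.univ.filter (fun σ : Fin m → Bool => psum σ m = 0 ∨ psum σ m = 2)).card
      = (2*n).choose n + (2*n).choose (n+1) := by
  have key : (Finset.univ.filter (fun σ : Fin m → Bool => psum σ m = 0 ∨ psum σ m = 2))
      = Finset.univ.filter (fun σ : Fin m → Bool => tcount σ ∈ ({n, n+1} : Finset ℕ)) := by
    apply Finset.filter_congr
    intro σ _
    have h1 := psum_last σ
    have h2 := tcount_le σ
    simp only [Finset.mem_insert, Finset.mem_singleton]
    omega
  rw [key, card_filter_tcount_mem, hm, Finset.sum_insert (by simp), Finset.sum_singleton]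


open MeasureTheory ProbabilityTheory

section Measure

variable {Ω : Type*} [MeasurableSpace Ω] (P : Measure Ω) [IsProbabilityMeasure P]
  (ξ : ℕ → Ω → ℤ)

/-- the cylinder event -/
def cyl (m : ℕ) (σ : Fin m → Bool) : Set Ω :=
  ⋂ i ∈ Finset.range m, ξ i ⁻¹' {stepAt σ i}

lemma mem_cyl {m : ℕ} {σ : Fin m → Bool} {ω : Ω} :
    ω ∈ cyl ξ m σ ↔ ∀ i : Fin m, ξ i ω = step (σ i) := by
  simp only [cyl, Set.mem_iInter, Finset.mem_range, Set.mem_preimage, Set.mem_singleton_iff]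
  constructor
  · intro h i
    have := h i i.isLt
    rwa [stepAt, dif_pos i.isLt, Fin.eta] at this
  · intro h i hi
    rw [stepAt, dif_pos hi]
    exact h ⟨i, hi⟩

lemma measurable_cyl (hmeas : ∀ k, Measurable (ξ k)) (m : ℕ) (σ : Fin m → Bool) :
    MeasurableSet (cyl ξ m σ) :=
  MeasurableSet.biInter (Finset.range m).countable_toSet
    (fun i _ => (hmeas i) (measurableSet_singleton _))

lemma measure_cyl (hmeas : ∀ k, Measurable (ξ k))
    (hindep : iIndepFun ξ P)
    (hone : ∀ k, P {ω | ξ k ω = 1} = 1 / 2)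
    (hmone : ∀ k, P {ω | ξ k ω = -1} = 1 / 2)
    (m : ℕ) (σ : Fin m → Bool) :
    P (cyl ξ m σ) = (2 : ENNReal)⁻¹ ^ m := by
  rw [cyl, hindep.measure_inter_preimage_eq_mul (Finset.range m)
    (sets := fun i => {stepAt σ i}) (fun i _ => measurableSet_singleton _)]
  have hfac : ∀ i ∈ Finset.range m, P (ξ i ⁻¹' {stepAt σ i}) = (2 : ENNReal)⁻¹ := by
    intro i hi
    rw [Finset.mem_range] at hi
    rw [stepAt, dif_pos hi]
    cases hσ : σ ⟨i, hi⟩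
    · have : ξ i ⁻¹' {step false} = {ω | ξ i ω = -1} := by
        ext ω; simp [step]
      rw [this, hmone]
      norm_num
    · have : ξ i ⁻¹' {step true} = {ω | ξ i ω = 1} := by
        ext ω; simp [step]
      rw [this, hone]
      norm_num
  rw [Finset.prod_congr rfl hfac, Finset.prod_const, Finset.card_range]

lemma measure_bad (hmeas : ∀ k, Measurable (ξ k))
    (hone : ∀ k, P {ω | ξ k ω = 1} = 1 / 2)
    (hmone : ∀ k, P {ω | ξ k ω = -1} = 1 / 2) (m : ℕ) :
    P (⋃ i ∈ Finset.range m, ({ω | ξ i ω = 1} ∪ {ω | ξ i ω = -1})ᶜ) = 0 := by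
  have : (⋃ i ∈ Finset.range m, ({ω | ξ i ω = 1} ∪ {ω | ξ i ω = -1})ᶜ)
      = ⋃ i ∈ (↑(Finset.range m) : Set ℕ), ({ω | ξ i ω = 1} ∪ {ω | ξ i ω = -1})ᶜ := by
    simp
  rw [this, measure_biUnion_null_iff (Finset.range m).countable_toSet]
  intro i _
  have hA : MeasurableSet {ω | ξ i ω = 1} := (hmeas i) (measurableSet_singleton 1)
  have hB : MeasurableSet {ω | ξ i ω = -1} := (hmeas i) (measurableSet_singleton (-1))
  have hd : Disjoint {ω | ξ i ω = 1} {ω | ξ i ω = -1} := by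
    rw [Set.disjoint_left]
    rintro ω h1 h2
    simp only [Set.mem_setOf_eq] at h1 h2
    omega
  have hu : P ({ω | ξ i ω = 1} ∪ {ω | ξ i ω = -1}) = 1 := by
    rw [measure_union hd hB, hone, hmone]
    exact ENNReal.add_halves 1
  rw [measure_compl (hA.union hB) (measure_ne_top P _), hu, measure_univ, tsub_self]

lemma measure_event (hmeas : ∀ k, Measurable (ξ k))
    (hindep : iIndepFun ξ P)
    (hone : ∀ k, P {ω | ξ k ω = 1} = 1 / 2)
    (hmone : ∀ k, P {ω | ξ k ω = -1} = 1 / 2)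
    (m : ℕ) (Q : (Fin m → Bool) → Prop) [DecidablePred Q] (A : Set Ω)
    (hA : ∀ (σ : Fin m → Bool) (ω : Ω), (∀ i : Fin m, ξ i ω = step (σ i)) → (ω ∈ A ↔ Q σ)) :
    P A = ((Finset.univ.filter Q).card : ENNReal) * (2 : ENNReal)⁻¹ ^ m := by
  set U : Set Ω := ⋃ σ ∈ Finset.univ.filter Q, cyl ξ m σ with hU
  set NS : Set Ω := ⋃ i ∈ Finset.range m, ({ω | ξ i ω = 1} ∪ {ω | ξ i ω = -1})ᶜ with hNS
  have hUA : U ⊆ A := by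
    intro ω hω
    rw [hU, Set.mem_iUnion₂] at hω
    obtain ⟨σ, hσ, hωσ⟩ := hω
    rw [Finset.mem_filter] at hσ
    exact (hA σ ω (mem_cyl ξ |>.mp hωσ)).mpr hσ.2
  have hAUN : A ⊆ U ∪ NS := by
    intro ω hω
    by_cases hN : ω ∈ NS
    · exact Or.inr hN
    · left
      have hval : ∀ i, i < m → ξ i ω = 1 ∨ ξ i ω = -1 := by
        intro i hi
        by_contra hc
        push_neg at hc
        apply hN
        rw [hNS, Set.mem_iUnion₂]
        exact ⟨i, Finset.mem_range.mpr hi, by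
          simp only [Set.mem_compl_iff, Set.mem_union, Set.mem_setOf_eq]
          push_neg
          exact hc⟩
      set σ : Fin m → Bool := fun i => decide (ξ i ω = 1) with hσdef
      have hξσ : ∀ i : Fin m, ξ i ω = step (σ i) := by
        intro i
        rcases hval i i.isLt with h | h
        · rw [h, hσdef]
          simp [h, step]
        · rw [h, hσdef]
          have : ¬ (ξ (i:ℕ) ω = 1) := by omega
          simp [this, step]
      rw [hU, Set.mem_iUnion₂]
      refine ⟨σ, Finset.mem_filter.mpr ⟨Finset.mem_univ _, (hA σ ω hξσ).mp hω⟩,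
        (mem_cyl ξ).mpr hξσ⟩
  have hPU : P U = ((Finset.univ.filter Q).card : ENNReal) * (2 : ENNReal)⁻¹ ^ m := by
    rw [hU, measure_biUnion_finset ?hd (fun σ _ => measurable_cyl ξ hmeas m σ)]
    · rw [Finset.sum_congr rfl (fun σ _ => measure_cyl P ξ hmeas hindep hone hmone m σ),
        Finset.sum_const, nsmul_eq_mul]
    case hd =>
      intro σ1 h1 σ2 h2 hne
      simp only [Function.onFun]
      rw [Set.disjoint_left]
      intro ω hω1 hω2
      apply hne
      funext i
      have e1 := (mem_cyl ξ).mp hω1 i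
      have e2 := (mem_cyl ξ).mp hω2 i
      exact step_inj (e1 ▸ e2 ▸ rfl)
  have hle1 : P A ≤ P U := by
    calc P A ≤ P (U ∪ NS) := measure_mono hAUN
    _ ≤ P U + P NS := measure_union_le _ _
    _ = P U := by rw [measure_bad P ξ hmeas hone hmone m, add_zero]
  have hle2 : P U ≤ P A := measure_mono hUA
  rw [← hPU]
  exact le_antisymm hle1 hle2

end Measure

end RW6


/-- for the simple symmetric random walk `S` on `ℤ` started at `0`,
with `T` the first hitting time of `2` (valued in `ℕ∞`),
`P(T > 2n) = P(S_{2n} ∈ {0,2}) = 4^{-n} (C(2n,n) + C(2n,n+1))`. -/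
theorem hitting_time_two_tail_eq {Ω : Type*} [MeasurableSpace Ω] (P : Measure Ω)
    [IsProbabilityMeasure P]
    (ξ : ℕ → Ω → ℤ) (hmeas : ∀ k, Measurable (ξ k))
    (hindep : iIndepFun ξ P)
    (hone : ∀ k, P {ω | ξ k ω = 1} = 1 / 2)
    (hmone : ∀ k, P {ω | ξ k ω = -1} = 1 / 2)
    (S : ℕ → Ω → ℤ) (hS : ∀ k ω, S k ω = ∑ i ∈ Finset.range k, ξ i ω)
    (T : Ω → ℕ∞) (hT : ∀ ω, T ω = ⨅ (k : ℕ) (_ : S k ω = 2), (k : ℕ∞))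
    (n : ℕ) :
    P {ω | ((2 * n : ℕ) : ℕ∞) < T ω} = P {ω | S (2 * n) ω = 0 ∨ S (2 * n) ω = 2} ∧
    P {ω | S (2 * n) ω = 0 ∨ S (2 * n) ω = 2} =
      ((Nat.choose (2 * n) n : ENNReal) + Nat.choose (2 * n) (n + 1)) / 4 ^ n := by
  classical
  set m := 2 * n with hm
  have hSk : ∀ (σ : Fin m → Bool) (ω : Ω), (∀ i : Fin m, ξ i ω = RW6.step (σ i)) →
      ∀ k, k ≤ m → S k ω = RW6.psum σ k := by
    intro σ ω hξσ k hk
    rw [hS, RW6.psum]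
    refine Finset.sum_congr rfl fun i hi => ?_
    rw [Finset.mem_range] at hi
    rw [RW6.stepAt, dif_pos (lt_of_lt_of_le hi hk)]
    exact hξσ ⟨i, lt_of_lt_of_le hi hk⟩
  have hQ2 : P {ω | S m ω = 0 ∨ S m ω = 2}
      = ((Finset.univ.filter
          (fun σ : Fin m → Bool => RW6.psum σ m = 0 ∨ RW6.psum σ m = 2)).card : ENNReal)
        * (2 : ENNReal)⁻¹ ^ m := by
    apply RW6.measure_event P ξ hmeas hindep hone hmone m
      (fun σ : Fin m → Bool => RW6.psum σ m = 0 ∨ RW6.psum σ m = 2)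
    intro σ ω hξσ
    rw [Set.mem_setOf_eq, hSk σ ω hξσ m le_rfl]
  have hQ1 : P {ω | ((m : ℕ) : ℕ∞) < T ω}
      = ((Finset.univ.filter (fun σ : Fin m → Bool => ¬ RW6.hits σ)).card : ENNReal)
        * (2 : ENNReal)⁻¹ ^ m := by
    apply RW6.measure_event P ξ hmeas hindep hone hmone m
      (fun σ : Fin m → Bool => ¬ RW6.hits σ)
    intro σ ω hξσ
    rw [Set.mem_setOf_eq]
    constructor
    · rintro hlt ⟨k, hkm, hk2⟩
      have h1 : T ω ≤ (k : ℕ∞) := by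
        rw [hT]
        exact iInf₂_le k (by rw [hSk σ ω hξσ k hkm]; exact hk2)
      have h2 : ((m : ℕ) : ℕ∞) < (k : ℕ∞) := lt_of_lt_of_le hlt h1
      rw [Nat.cast_lt] at h2
      omega
    · intro hnh
      rw [hT]
      have hbig : ∀ (k : ℕ), S k ω = 2 → ((m + 1 : ℕ) : ℕ∞) ≤ (k : ℕ∞) := by
        intro k hk
        rw [Nat.cast_le]
        by_contra hc
        push_neg at hc
        exact hnh ⟨k, by omega, by rw [← hSk σ ω hξσ k (by omega)]; exact hk⟩
      calc ((m : ℕ) : ℕ∞) < ((m + 1 : ℕ) : ℕ∞) := by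
            exact_mod_cast Nat.lt_succ_self m
        _ ≤ ⨅ (k : ℕ) (_ : S k ω = 2), (k : ℕ∞) :=
            le_iInf fun k => le_iInf fun hk => hbig k hk
  refine ⟨?_, ?_⟩
  · rw [hQ1, hQ2, RW6.card_not_hits hm, RW6.card_end hm]
  · rw [hQ2, RW6.card_end hm]
    have h4 : ((2 : ENNReal)⁻¹) ^ m = ((4 : ENNReal) ^ n)⁻¹ := by
      rw [← ENNReal.inv_pow, hm, pow_mul]
      norm_num
    rw [h4, div_eq_mul_inv]
    push_cast
    ring
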